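/- For x in the interval [0,1] and integer m ≥ 2, the function Ψ(x) = (1/m²) · d²/dx² (x^m (1−x)^m) satisfies −(1/(2m)) · x^{m−2}(1−x)^{m−2} ≤ Ψ(x) ≤ (1 − 1/m) · x^{m−2}(1−x)^{m−2}. -/

import Mathlib

lemma psi_d1 (k : ℕ) (y : ℝ) :
    HasDerivAt (fun y : ℝ => y ^ (k + 2) * (1 - y) ^ (k + 2))
      (((k : ℝ) + 2) * y ^ (k + 1) * (1 - y) ^ (k + 2)
        - ((k : ℝ) + 2) * y ^ (k + 2) * (1 - y) ^ (k + 1)) y := by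
  have h1 : HasDerivAt (fun y : ℝ => y ^ (k + 2)) (((k : ℝ) + 2) * y ^ (k + 1)) y := by
    simpa using hasDerivAt_pow (k + 2) y
  have h2 : HasDerivAt (fun y : ℝ => (1 - y) ^ (k + 2))
      (-(((k : ℝ) + 2) * (1 - y) ^ (k + 1))) y := by
    have := (hasDerivAt_pow (k + 2) (1 - y)).comp y
      ((hasDerivAt_const y (1 : ℝ)).sub (hasDerivAt_id y))
    simpa [Function.comp_def] using this
  have := h1.mul h2
  exact this.congr_deriv (by ring)

lemma psi_d2 (k : ℕ) (y : ℝ) :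
    HasDerivAt (fun y : ℝ => ((k : ℝ) + 2) * y ^ (k + 1) * (1 - y) ^ (k + 2)
        - ((k : ℝ) + 2) * y ^ (k + 2) * (1 - y) ^ (k + 1))
      (((k : ℝ) + 2) * ((k : ℝ) + 1) * y ^ k * (1 - y) ^ (k + 2)
        - 2 * ((k : ℝ) + 2) ^ 2 * y ^ (k + 1) * (1 - y) ^ (k + 1)
        + ((k : ℝ) + 2) * ((k : ℝ) + 1) * y ^ (k + 2) * (1 - y) ^ k) y := by
  have hy1 : HasDerivAt (fun y : ℝ => y ^ (k + 1)) (((k : ℝ) + 1) * y ^ k) y := by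
    simpa using hasDerivAt_pow (k + 1) y
  have hy2 : HasDerivAt (fun y : ℝ => y ^ (k + 2)) (((k : ℝ) + 2) * y ^ (k + 1)) y := by
    simpa using hasDerivAt_pow (k + 2) y
  have hz1 : HasDerivAt (fun y : ℝ => (1 - y) ^ (k + 1))
      (-(((k : ℝ) + 1) * (1 - y) ^ k)) y := by
    have := (hasDerivAt_pow (k + 1) (1 - y)).comp y
      ((hasDerivAt_const y (1 : ℝ)).sub (hasDerivAt_id y))
    simpa [Function.comp_def] using this
  have hz2 : HasDerivAt (fun y : ℝ => (1 - y) ^ (k + 2))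
      (-(((k : ℝ) + 2) * (1 - y) ^ (k + 1))) y := by
    have := (hasDerivAt_pow (k + 2) (1 - y)).comp y
      ((hasDerivAt_const y (1 : ℝ)).sub (hasDerivAt_id y))
    simpa [Function.comp_def] using this
  have h1 := ((hy1.const_mul ((k : ℝ) + 2)).mul hz2)
  have h2 := ((hy2.const_mul ((k : ℝ) + 2)).mul hz1)
  have := h1.sub h2
  exact this.congr_deriv (by ring)

lemma psi_deriv2 (k : ℕ) (x : ℝ) :
    deriv (deriv fun y : ℝ => y ^ (k + 2) * (1 - y) ^ (k + 2)) x
      = ((k : ℝ) + 2) * ((k : ℝ) + 1) * x ^ k * (1 - x) ^ (k + 2)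
        - 2 * ((k : ℝ) + 2) ^ 2 * x ^ (k + 1) * (1 - x) ^ (k + 1)
        + ((k : ℝ) + 2) * ((k : ℝ) + 1) * x ^ (k + 2) * (1 - x) ^ k := by
  have hfun : deriv (fun y : ℝ => y ^ (k + 2) * (1 - y) ^ (k + 2))
      = fun y : ℝ => ((k : ℝ) + 2) * y ^ (k + 1) * (1 - y) ^ (k + 2)
        - ((k : ℝ) + 2) * y ^ (k + 2) * (1 - y) ^ (k + 1) := by
    funext y
    exact (psi_d1 k y).deriv
  rw [hfun]
  exact (psi_d2 k x).deriv

theorem psi_second_deriv_bound (m : ℕ) (hm : 2 ≤ m) (x : ℝ)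
    (hx : x ∈ Set.Icc (0 : ℝ) 1) :
    -(1 / (2 * (m : ℝ))) * x ^ (m - 2) * (1 - x) ^ (m - 2)
        ≤ (1 / (m : ℝ) ^ 2) * deriv (deriv fun y : ℝ => y ^ m * (1 - y) ^ m) x
      ∧ (1 / (m : ℝ) ^ 2) * deriv (deriv fun y : ℝ => y ^ m * (1 - y) ^ m) x
        ≤ (1 - 1 / (m : ℝ)) * x ^ (m - 2) * (1 - x) ^ (m - 2) := by
  obtain ⟨k, rfl⟩ : ∃ k, m = k + 2 := ⟨m - 2, by omega⟩
  obtain ⟨hx0, hx1⟩ := hx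
  have hkm : k + 2 - 2 = k := by omega
  have hc : (0 : ℝ) < (k : ℝ) + 2 := by positivity
  have hcast : ((k + 2 : ℕ) : ℝ) = (k : ℝ) + 2 := by push_cast; ring
  rw [hkm, psi_deriv2 k x, hcast]
  set c : ℝ := (k : ℝ) + 2 with hcdef
  have hP : (0 : ℝ) ≤ x ^ k * (1 - x) ^ k :=
    mul_nonneg (pow_nonneg hx0 k) (pow_nonneg (by linarith) k)
  have hF : c * ((k : ℝ) + 1) * x ^ k * (1 - x) ^ (k + 2)
        - 2 * c ^ 2 * x ^ (k + 1) * (1 - x) ^ (k + 1)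
        + c * ((k : ℝ) + 1) * x ^ (k + 2) * (1 - x) ^ k
      = x ^ k * (1 - x) ^ k
        * (c * (((k : ℝ) + 1) * ((1 - x) ^ 2 + x ^ 2) - 2 * c * (x * (1 - x)))) := by
    ring
  rw [hF]
  have ht0 : (0 : ℝ) ≤ x * (1 - x) := by nlinarith
  have ht1 : x * (1 - x) ≤ 1 / 4 := by nlinarith [sq_nonneg (x - 1 / 2)]
  have hhlow : -(1 / 2 : ℝ) ≤ ((k : ℝ) + 1) * ((1 - x) ^ 2 + x ^ 2) - 2 * c * (x * (1 - x)) := by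
    nlinarith [mul_nonneg (Nat.cast_nonneg (α := ℝ) k) (by linarith : (0:ℝ) ≤ 1 / 4 - x * (1 - x))]
  have hhup : ((k : ℝ) + 1) * ((1 - x) ^ 2 + x ^ 2) - 2 * c * (x * (1 - x)) ≤ (k : ℝ) + 1 := by
    nlinarith [Nat.cast_nonneg (α := ℝ) k]
  constructor
  · have e1 : -(1 / (2 * c)) * x ^ k * (1 - x) ^ k
        = (1 / c ^ 2) * (x ^ k * (1 - x) ^ k * (c * (-(1 / 2 : ℝ)))) := by
      field_simp
    rw [e1]
    apply mul_le_mul_of_nonneg_left _ (by positivity : (0 : ℝ) ≤ 1 / c ^ 2)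
    apply mul_le_mul_of_nonneg_left _ hP
    exact mul_le_mul_of_nonneg_left hhlow (le_of_lt hc)
  · have e2 : (1 - 1 / c) * x ^ k * (1 - x) ^ k
        = (1 / c ^ 2) * (x ^ k * (1 - x) ^ k * (c * ((k : ℝ) + 1))) := by
      rw [hcdef]
      field_simp
      ring
    rw [e2]
    apply mul_le_mul_of_nonneg_left _ (by positivity : (0 : ℝ) ≤ 1 / c ^ 2)
    apply mul_le_mul_of_nonneg_left _ hP
    exact mul_le_mul_of_nonneg_left hhup (le_of_lt hc)
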